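/- Every convex function g : ℝᵈ → ℝ ∪ {+∞} has an extended subgradient at every point x₀ of its effective domain: there exists a linear extended f : ℝᵈ → ℝ̄ with g(x) ≥ g(x₀) + f(x - x₀) for all x ∈ ℝᵈ. -/

import Mathlib

/-- A *linear extended function*: scaling and additivity whenever the sum is legal. -/
def IsLinExt {E : Type*} [AddCommGroup E] [Module ℝ E] (f : E → EReal) : Prop :=
  (∀ (α : ℝ) (x : E), f (α • x) = (α : EReal) * f x) ∧
  (∀ x x' : E, ¬ ((f x = ⊤ ∧ f x' = ⊥) ∨ (f x = ⊥ ∧ f x' = ⊤)) →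
    f (x + x') = f x + f x')

/-- An *affine extended function*: a horizontally and vertically shifted linear extended fn. -/
def IsAffExt {E : Type*} [AddCommGroup E] [Module ℝ E] (h : E → EReal) : Prop :=
  ∃ (f : E → EReal) (x₀ : E) (β : ℝ), IsLinExt f ∧ ∀ x, h x = f (x - x₀) + (β : EReal)

section helpers
variable {E : Type*} [AddCommGroup E] [Module ℝ E]

lemma IsLinExt.zero {f : E → EReal} (hf : IsLinExt f) : f 0 = 0 := by
  have := hf.1 0 0; simpa using this

lemma isLinExt_coe (L : E →ₗ[ℝ] ℝ) : IsLinExt (fun x => ((L x : ℝ) : EReal)) := by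
  constructor
  · intro α x
    show ((L (α • x) : ℝ) : EReal) = _
    rw [map_smul, smul_eq_mul, EReal.coe_mul]
  · intro x x' _
    show ((L (x + x') : ℝ) : EReal) = _
    rw [map_add, EReal.coe_add]

noncomputable def extFun (φ : E →ₗ[ℝ] ℝ) (f' : LinearMap.ker φ → EReal) : E → EReal :=
  fun x => if h : φ x = 0 then f' ⟨x, h⟩ else if 0 < φ x then ⊥ else ⊤

lemma extFun_zero (φ : E →ₗ[ℝ] ℝ) (f' : LinearMap.ker φ → EReal) {x : E} (h : φ x = 0) :
    extFun φ f' x = f' ⟨x, h⟩ := by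
  unfold extFun; rw [dif_pos h]

lemma extFun_pos (φ : E →ₗ[ℝ] ℝ) (f' : LinearMap.ker φ → EReal) {x : E} (h : 0 < φ x) :
    extFun φ f' x = ⊥ := by
  unfold extFun; rw [dif_neg (ne_of_gt h), if_pos h]

lemma extFun_neg (φ : E →ₗ[ℝ] ℝ) (f' : LinearMap.ker φ → EReal) {x : E} (h : φ x < 0) :
    extFun φ f' x = ⊤ := by
  unfold extFun; rw [dif_neg (ne_of_lt h), if_neg (not_lt.2 h.le)]

lemma isLinExt_extFun (φ : E →ₗ[ℝ] ℝ) (f' : LinearMap.ker φ → EReal) (hf' : IsLinExt f') :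
    IsLinExt (extFun φ f') := by
  constructor
  · intro α x
    by_cases hα : α = 0
    · subst hα
      rw [zero_smul, extFun_zero φ f' (map_zero φ)]
      have h0 : f' ⟨0, map_zero φ⟩ = 0 := hf'.zero
      rw [h0, EReal.coe_zero, zero_mul]
    · have hφs : φ (α • x) = α * φ x := by rw [map_smul, smul_eq_mul]
      rcases lt_trichotomy (φ x) 0 with hx | hx | hx
      · rw [extFun_neg φ f' hx]
        rcases lt_or_gt_of_ne hα with hα' | hα'
        · rw [extFun_pos φ f' (by rw [hφs]; exact mul_pos_of_neg_of_neg hα' hx),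
            EReal.coe_mul_top_of_neg hα']
        · rw [extFun_neg φ f' (by rw [hφs]; exact mul_neg_of_pos_of_neg hα' hx),
            EReal.coe_mul_top_of_pos hα']
      · rw [extFun_zero φ f' hx, extFun_zero φ f' (by rw [hφs, hx, mul_zero])]
        exact hf'.1 α ⟨x, hx⟩
      · rw [extFun_pos φ f' hx]
        rcases lt_or_gt_of_ne hα with hα' | hα'
        · rw [extFun_neg φ f' (by rw [hφs]; exact mul_neg_of_neg_of_pos hα' hx),
            EReal.coe_mul_bot_of_neg hα']
        · rw [extFun_pos φ f' (by rw [hφs]; exact mul_pos hα' hx),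
            EReal.coe_mul_bot_of_pos hα']
  · intro x x' hyp
    have hadd : φ (x + x') = φ x + φ x' := map_add φ x x'
    rcases lt_trichotomy (φ x) 0 with hx | hx | hx <;>
      rcases lt_trichotomy (φ x') 0 with hx' | hx' | hx'
    · rw [extFun_neg φ f' hx, extFun_neg φ f' hx',
        extFun_neg φ f' (by rw [hadd]; linarith), EReal.top_add_top]
    · rw [extFun_neg φ f' hx, extFun_zero φ f' hx',
        extFun_neg φ f' (by rw [hadd, hx', add_zero]; exact hx)]
      rw [extFun_neg φ f' hx, extFun_zero φ f' hx'] at hyp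
      exact (EReal.top_add_of_ne_bot (fun hb => hyp (Or.inl ⟨rfl, hb⟩))).symm
    · exact absurd (Or.inl ⟨extFun_neg φ f' hx, extFun_pos φ f' hx'⟩) hyp
    · rw [extFun_zero φ f' hx, extFun_neg φ f' hx',
        extFun_neg φ f' (by rw [hadd, hx, zero_add]; exact hx')]
      rw [extFun_zero φ f' hx, extFun_neg φ f' hx'] at hyp
      exact (EReal.add_top_of_ne_bot (fun hb => hyp (Or.inr ⟨hb, rfl⟩))).symm
    · rw [extFun_zero φ f' hx, extFun_zero φ f' hx',
        extFun_zero φ f' (by rw [hadd, hx, hx', add_zero])]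
      rw [extFun_zero φ f' hx, extFun_zero φ f' hx'] at hyp
      exact hf'.2 ⟨x, hx⟩ ⟨x', hx'⟩ hyp
    · rw [extFun_zero φ f' hx, extFun_pos φ f' hx',
        extFun_pos φ f' (by rw [hadd, hx, zero_add]; exact hx'), EReal.add_bot]
    · exact absurd (Or.inr ⟨extFun_pos φ f' hx, extFun_neg φ f' hx'⟩) hyp
    · rw [extFun_pos φ f' hx, extFun_zero φ f' hx',
        extFun_pos φ f' (by rw [hadd, hx', add_zero]; exact hx), EReal.bot_add]
    · rw [extFun_pos φ f' hx, extFun_pos φ f' hx',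
        extFun_pos φ f' (by rw [hadd]; linarith), EReal.bot_add]

end helpers

theorem subgrad_aux (n : ℕ) :
    ∀ (E : Type) [NormedAddCommGroup E] [NormedSpace ℝ E] [FiniteDimensional ℝ E],
      Module.finrank ℝ E ≤ n → ∀ g : E → EReal, (∀ x, g x ≠ ⊥) →
      Convex ℝ {p : E × ℝ | g p.1 ≤ (p.2 : EReal)} →
      ∀ x₀ : E, g x₀ ≠ ⊤ →
      ∃ f : E → EReal, IsLinExt f ∧ ∀ x, g x₀ + f (x - x₀) ≤ g x := by
  induction n with
  | zero =>
    intro E _ _ _ hrank g hbot hconv x₀ hx₀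
    have h0 : Module.finrank ℝ E = 0 := Nat.le_zero.mp hrank
    have hsub : Subsingleton E := Module.finrank_zero_iff.mp h0
    refine ⟨fun _ => 0, ⟨fun α x => (mul_zero _).symm, fun x x' _ => (add_zero (0:EReal)).symm⟩, ?_⟩
    intro x
    have hx : x = x₀ := Subsingleton.elim x x₀
    rw [hx, add_zero]
  | succ n IH =>
    intro E _ _ _ hrank g hbot hconv x₀ hx₀
    set S := {p : E × ℝ | g p.1 ≤ (p.2 : EReal)} with hSdef
    set c := (g x₀).toReal with hc
    have hgx₀ : g x₀ = (c : EReal) := (EReal.coe_toReal hx₀ (hbot x₀)).symm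
    have hptS : ((x₀, c) : E × ℝ) ∈ S := by
      show g x₀ ≤ (c : EReal); rw [hgx₀]
    have hmem : ∀ x : E, g x ≠ ⊤ → ((x, (g x).toReal) : E × ℝ) ∈ S := fun x hx =>
      le_of_eq (EReal.coe_toReal hx (hbot x)).symm
    have hdec : ∀ (ψ : (E × ℝ) →L[ℝ] ℝ) (p : E × ℝ), ψ p = ψ (p.1, 0) + p.2 * ψ (0, 1) := by
      intro ψ p
      have hp : p = ((p.1, (0:ℝ)) : E × ℝ) + p.2 • ((0:E), (1:ℝ)) := by
        apply Prod.ext <;> simp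
      conv_lhs => rw [hp]
      rw [map_add, map_smul, smul_eq_mul]
    have key : (∃ v : E →ₗ[ℝ] ℝ, ∀ x, g x ≠ ⊤ → c + v (x - x₀) ≤ (g x).toReal) ∨
        (∃ φ : E →L[ℝ] ℝ, φ ≠ 0 ∧ ∀ x, g x ≠ ⊤ → 0 ≤ φ (x - x₀)) := by
      by_cases hint : (interior S).Nonempty
      · -- separation at (x₀, c)
        have hpt : ((x₀, c) : E × ℝ) ∉ interior S := by
          intro hmem'
          have hcont : Continuous fun t : ℝ => ((x₀, t) : E × ℝ) :=
            continuous_const.prodMk continuous_id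
          have hnb : (fun t : ℝ => ((x₀, t) : E × ℝ)) ⁻¹' interior S ∈ nhds c :=
            (isOpen_interior.preimage hcont).mem_nhds hmem'
          obtain ⟨ε, hε, hball⟩ := Metric.mem_nhds_iff.mp hnb
          have hin : ((x₀, c - ε/2) : E × ℝ) ∈ S := by
            apply interior_subset
            apply hball
            simp only [Metric.mem_ball, Real.dist_eq]
            rw [abs_of_nonpos (by linarith)]
            linarith
          have : g x₀ ≤ ((c - ε/2 : ℝ) : EReal) := hin
          rw [hgx₀, EReal.coe_le_coe_iff] at this
          linarith
        obtain ⟨ψ, hψ⟩ := geometric_hahn_banach_open_point hconv.interior isOpen_interior hpt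
        obtain ⟨z, hz⟩ := hint
        have hS : ∀ p ∈ S, ψ p ≤ ψ (x₀, c) := by
          intro p hp
          have keyt : ∀ t : ℝ, t ∈ Set.Ioc (0:ℝ) 1 →
              t * ψ z + (1 - t) * ψ p ≤ ψ (x₀, c) := by
            intro t ht
            have hmem2 := hconv.combo_interior_self_mem_interior (a := t) (b := 1 - t)
              hz hp ht.1 (by linarith [ht.2]) (by ring)
            have := hψ _ hmem2
            rw [map_add, map_smul, map_smul, smul_eq_mul, smul_eq_mul] at this
            exact this.le
          have lim : Filter.Tendsto (fun t : ℝ => t * ψ z + (1 - t) * ψ p)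
              (nhdsWithin 0 (Set.Ioi 0)) (nhds (ψ p)) := by
            have hcont2 : Continuous fun t : ℝ => t * ψ z + (1 - t) * ψ p :=
              (continuous_id.mul continuous_const).add
                ((continuous_const.sub continuous_id).mul continuous_const)
            have := hcont2.tendsto 0
            simp only [zero_mul, sub_zero, one_mul, zero_add] at this
            exact this.mono_left nhdsWithin_le_nhds
          refine le_of_tendsto lim ?_
          filter_upwards [Ioc_mem_nhdsGT_of_mem (Set.mem_Ico.2 ⟨le_refl 0, zero_lt_one⟩)]
            with t ht using keyt t ht
        have hs_le : ψ ((0:E), (1:ℝ)) ≤ 0 := by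
          have h1 := hS ((x₀, c + 1) : E × ℝ) (by
            show g x₀ ≤ ((c + 1 : ℝ) : EReal)
            rw [hgx₀, EReal.coe_le_coe_iff]; linarith)
          rw [hdec ψ (x₀, c + 1), hdec ψ (x₀, c)] at h1
          simp only at h1
          nlinarith [h1]
        set s := ψ ((0:E), (1:ℝ)) with hsdef
        have hψ1sub : ∀ x y : E, ψ ((x - y, (0:ℝ)) : E × ℝ) = ψ (x, 0) - ψ (y, 0) := by
          intro x y
          have : ((x - y, (0:ℝ)) : E × ℝ) = ((x, (0:ℝ)) : E × ℝ) - (y, 0) := by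
            apply Prod.ext <;> simp
          rw [this, map_sub]
        have hs0iff : s = 0 → ψ ((0:E), (1:ℝ)) = 0 := fun h => by rw [← hsdef, h]
        rcases lt_or_eq_of_le hs_le with hslt | hseq
        · left
          refine ⟨(-s)⁻¹ • (ψ.comp (ContinuousLinearMap.inl ℝ E ℝ)).toLinearMap, ?_⟩
          intro x hx
          have h1 := hS _ (hmem x hx)
          rw [hdec ψ (x, (g x).toReal), hdec ψ (x₀, c)] at h1
          simp only at h1
          set r := (g x).toReal
          set A := ψ ((x, (0:ℝ)) : E × ℝ) with hA
          set B := ψ ((x₀, (0:ℝ)) : E × ℝ) with hB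
          have happ : ((-s)⁻¹ • (ψ.comp (ContinuousLinearMap.inl ℝ E ℝ)).toLinearMap) (x - x₀)
              = (-s)⁻¹ * (A - B) := by
            simp only [LinearMap.smul_apply, smul_eq_mul, ContinuousLinearMap.coe_comp,
              LinearMap.coe_comp, Function.comp_apply, ContinuousLinearMap.coe_coe,
              ContinuousLinearMap.inl_apply]
            rw [hψ1sub x x₀]
          rw [happ]
          have hs' : (0:ℝ) < -s := neg_pos.2 hslt
          have h2 : A - B ≤ (c - r) * s := by nlinarith [h1]
          have h3 : (0:ℝ) ≤ (-s)⁻¹ := (inv_pos.2 hs').le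
          have h4 : (-s)⁻¹ * ((c - r) * s) = r - c := by
            field_simp
            rw [mul_div_cancel_left₀ _ hslt.ne]
            ring
          have h5 := mul_le_mul_of_nonneg_left h2 h3
          rw [h4] at h5
          linarith
        · right
          have hs0 : ψ ((0:E), (1:ℝ)) = 0 := hs0iff hseq
          refine ⟨-(ψ.comp (ContinuousLinearMap.inl ℝ E ℝ)), ?_, ?_⟩
          · intro hzero
            have hψ0 : ∀ p : E × ℝ, ψ p = 0 := by
              intro p
              rw [hdec ψ p, hs0, mul_zero, add_zero]
              have h2 : (-(ψ.comp (ContinuousLinearMap.inl ℝ E ℝ))) p.1 = 0 := by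
                rw [hzero]; rfl
              simp only [ContinuousLinearMap.neg_apply, ContinuousLinearMap.comp_apply,
                ContinuousLinearMap.inl_apply, neg_eq_zero] at h2
              exact h2
            have := hψ z hz
            rw [hψ0 z, hψ0 (x₀, c)] at this
            exact lt_irrefl 0 this
          · intro x hx
            have h1 := hS _ (hmem x hx)
            rw [hdec ψ (x, (g x).toReal), hdec ψ (x₀, c), hs0] at h1
            simp only [mul_zero, add_zero] at h1
            simp only [ContinuousLinearMap.neg_apply, ContinuousLinearMap.comp_apply,
              ContinuousLinearMap.inl_apply]
            rw [hψ1sub x x₀]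
            linarith
      · -- empty interior: S lies in a proper affine subspace
        right
        have haff : affineSpan ℝ S ≠ ⊤ := by
          intro htop
          exact hint (hconv.interior_nonempty_iff_affineSpan_eq_top.2 htop)
        obtain ⟨q, -, hq⟩ := SetLike.exists_of_lt haff.lt_top
        have hv₀ : q - ((x₀, c) : E × ℝ) ∉ (affineSpan ℝ S).direction := by
          intro hd
          have := AffineSubspace.vadd_mem_of_mem_direction hd
            (subset_affineSpan ℝ S hptS)
          rw [vadd_eq_add, sub_add_cancel] at this
          exact hq this
        have hclosed : IsClosed ((affineSpan ℝ S).direction : Set (E × ℝ)) :=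
          Submodule.closed_of_finiteDimensional _
        obtain ⟨ψ, u, hlt, hu⟩ := geometric_hahn_banach_closed_point
          ((affineSpan ℝ S).direction.convex) hclosed hv₀
        have hzero : ∀ a ∈ (affineSpan ℝ S).direction, ψ a = 0 := by
          intro a ha
          by_contra hne
          have h1 := hlt (((u + 1) / ψ a) • a) (Submodule.smul_mem _ _ ha)
          rw [map_smul, smul_eq_mul, div_mul_cancel₀ _ hne] at h1
          linarith
        have hu0 : (0:ℝ) < u := by
          have h1 := hlt 0 (Submodule.zero_mem _)
          rw [map_zero] at h1
          exact h1
        have hm1 : ((x₀, c + 1) : E × ℝ) ∈ S := by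
          show g x₀ ≤ ((c + 1 : ℝ) : EReal)
          rw [hgx₀, EReal.coe_le_coe_iff]; linarith
        have hd1 : ((x₀, c + 1) : E × ℝ) - (x₀, c) ∈ (affineSpan ℝ S).direction := by
          have := AffineSubspace.vsub_mem_direction (subset_affineSpan ℝ S hm1)
            (subset_affineSpan ℝ S hptS)
          rwa [vsub_eq_sub] at this
        have h01 : ψ ((0:E), (1:ℝ)) = 0 := by
          have heq : ((x₀, c + 1) : E × ℝ) - (x₀, c) = ((0:E), (1:ℝ)) := by
            apply Prod.ext <;> simp
          rw [← heq]
          exact hzero _ hd1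
        refine ⟨ψ.comp (ContinuousLinearMap.inl ℝ E ℝ), ?_, ?_⟩
        · intro h0
          have hψ0 : ∀ p : E × ℝ, ψ p = 0 := by
            intro p
            rw [hdec ψ p, h01, mul_zero, add_zero]
            have h2 : (ψ.comp (ContinuousLinearMap.inl ℝ E ℝ)) p.1 = 0 := by rw [h0]; rfl
            simpa using h2
          rw [hψ0] at hu
          linarith
        · intro x hx
          have hd2 : ((x, (g x).toReal) : E × ℝ) - (x₀, c) ∈ (affineSpan ℝ S).direction := by
            have := AffineSubspace.vsub_mem_direction (subset_affineSpan ℝ S (hmem x hx))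
              (subset_affineSpan ℝ S hptS)
            rwa [vsub_eq_sub] at this
          have h2 := hzero _ hd2
          have heq2 : ((x, (g x).toReal) : E × ℝ) - (x₀, c)
              = ((x - x₀ : E), ((g x).toReal - c : ℝ)) := rfl
          rw [heq2, hdec ψ ((x - x₀ : E), ((g x).toReal - c : ℝ)), h01, mul_zero, add_zero] at h2
          simp only [ContinuousLinearMap.comp_apply, ContinuousLinearMap.inl_apply]
          rw [h2]
    -- consume the dichotomy
    rcases key with ⟨v, hv⟩ | ⟨φ, hφ, hsupp⟩
    · refine ⟨fun y => ((v y : ℝ) : EReal), isLinExt_coe v, ?_⟩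
      intro x
      by_cases hx : g x = ⊤
      · rw [hx]; exact le_top
      · rw [hgx₀, ← EReal.coe_add]
        calc ((c + v (x - x₀) : ℝ) : EReal) ≤ (((g x).toReal : ℝ) : EReal) :=
              EReal.coe_le_coe_iff.2 (hv x hx)
          _ = g x := EReal.coe_toReal hx (hbot x)
    · -- recurse on the kernel hyperplane
      set K := LinearMap.ker (φ.toLinearMap) with hK
      have hrk : Module.finrank ℝ K ≤ n := by
        have h1 := LinearMap.finrank_range_add_finrank_ker (φ.toLinearMap)
        have hsurj : LinearMap.range (φ.toLinearMap) = ⊤ := by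
          obtain ⟨x, hx⟩ : ∃ x, φ x ≠ 0 := by
            by_contra h
            push_neg at h
            exact hφ (ContinuousLinearMap.ext fun x => by rw [h x]; rfl)
          rw [LinearMap.range_eq_top]
          intro r
          refine ⟨(r / φ x) • x, ?_⟩
          rw [map_smul, smul_eq_mul]
          show r / φ x * φ x = r
          field_simp
        rw [hsurj, finrank_top, Module.finrank_self] at h1
        rw [← hK] at h1
        omega
      set g' : K → EReal := fun k => g (x₀ + (k : E)) with hg'
      have hbot' : ∀ k, g' k ≠ ⊥ := fun k => hbot _
      have hconv' : Convex ℝ {p : K × ℝ | g' p.1 ≤ (p.2 : EReal)} := by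
        intro p hp q hq a b ha hb hab
        have h1 := hconv (show ((x₀ + (p.1 : E), p.2) : E × ℝ) ∈ S from hp)
          (show ((x₀ + (q.1 : E), q.2) : E × ℝ) ∈ S from hq) ha hb hab
        show g' (a • p + b • q).1 ≤ (((a • p + b • q).2 : ℝ) : EReal)
        have hfst : x₀ + (((a • p + b • q).1 : K) : E)
            = a • (x₀ + (p.1 : E)) + b • (x₀ + (q.1 : E)) := by
          have h2 : (((a • p + b • q).1 : K) : E) = a • (p.1 : E) + b • (q.1 : E) := by
            simp
          rw [h2]
          calc x₀ + (a • (p.1 : E) + b • (q.1 : E))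
              = (a + b) • x₀ + (a • (p.1 : E) + b • (q.1 : E)) := by rw [hab, one_smul]
            _ = a • (x₀ + (p.1 : E)) + b • (x₀ + (q.1 : E)) := by module
        show g (x₀ + (((a • p + b • q).1 : K) : E)) ≤ _
        rw [hfst]
        exact h1
      have hg'0 : g' 0 = g x₀ := by
        show g (x₀ + ((0 : K) : E)) = g x₀
        rw [ZeroMemClass.coe_zero, add_zero]
      obtain ⟨f', hf', hineq'⟩ := IH K hrk g' hbot' hconv' 0 (by rw [hg'0]; exact hx₀)
      refine ⟨extFun (φ.toLinearMap) f', isLinExt_extFun _ _ hf', ?_⟩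
      intro x
      by_cases hy : φ.toLinearMap (x - x₀) = 0
      · rw [extFun_zero _ _ hy]
        have h1 := hineq' ⟨x - x₀, hy⟩
        rw [sub_zero, hg'0] at h1
        have h2 : g' ⟨x - x₀, hy⟩ = g x := by
          show g (x₀ + (x - x₀)) = g x
          congr 1
          abel
        rwa [h2] at h1
      · rcases lt_or_gt_of_ne hy with hneg | hpos
        · have hgx : g x = ⊤ := by
            by_contra hgx
            have h3 := hsupp x hgx
            have h4 : φ.toLinearMap (x - x₀) = φ (x - x₀) := rfl
            rw [h4] at hneg
            linarith
          rw [hgx]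
          exact le_top
        · rw [extFun_pos _ _ hpos, EReal.add_bot]
          exact bot_le

theorem stmt_9 (d : ℕ) (g : (Fin d → ℝ) → EReal) (hbot : ∀ x, g x ≠ ⊥)
    (hconv : Convex ℝ {p : (Fin d → ℝ) × ℝ | g p.1 ≤ (p.2 : EReal)}) :
    ∀ x₀ : Fin d → ℝ, g x₀ ≠ ⊤ →
      ∃ f : (Fin d → ℝ) → EReal, IsLinExt f ∧ ∀ x, g x₀ + f (x - x₀) ≤ g x := by
  intro x₀ hx₀
  exact subgrad_aux (Module.finrank ℝ (Fin d → ℝ)) (Fin d → ℝ) le_rfl g hbot hconv x₀ hx₀
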